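/- For every b > 0 and every k ∈ (0,1), the function κ^{b,·} : (0,1) → ℝ given by κ^{b,k} = -2(E(k) + √(1-k²)·K(k)) / (π b (1 + √(1-k²))) is differentiable at k, with derivative ∂_k κ^{b,k} = -2·(2(E(k) - K(k)) + k²·K(k)) / (π b k √(1-k²) (1 + √(1-k²))). -/

import Mathlib

open Real intervalIntegral MeasureTheory

/-- Complete elliptic integral of the first kind. -/
noncomputable def ellK (k : ℝ) : ℝ :=
  ∫ u in (0:ℝ)..(π/2), 1 / Real.sqrt (1 - k^2 * Real.sin u ^ 2)

/-- Complete elliptic integral of the second kind. -/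
noncomputable def ellE (k : ℝ) : ℝ :=
  ∫ u in (0:ℝ)..(π/2), Real.sqrt (1 - k^2 * Real.sin u ^ 2)

/-- The constant mean curvature of the unduloid with size parameter `b` and
shape parameter `k`. -/
noncomputable def kappa (b k : ℝ) : ℝ :=
  -2 * (ellE k + Real.sqrt (1 - k^2) * ellK k) / (π * b * (1 + Real.sqrt (1 - k^2)))

lemma aux_pos {x : ℝ} (hx : |x| < 1) (u : ℝ) : 0 < 1 - x^2 * Real.sin u ^ 2 := by
  have h1 : Real.sin u ^ 2 ≤ 1 := Real.sin_sq_le_one u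
  have h2 : x^2 < 1 := by
    have := abs_lt.mp hx
    nlinarith [this.1, this.2]
  nlinarith [sq_nonneg x, sq_nonneg (Real.sin u)]

lemma cont_sqrt (x : ℝ) : Continuous fun u : ℝ => Real.sqrt (1 - x^2 * Real.sin u ^ 2) := by
  fun_prop

lemma hasDerivAt_sqrtTerm {x : ℝ} (hx : |x| < 1) (u : ℝ) :
    HasDerivAt (fun y : ℝ => Real.sqrt (1 - y^2 * Real.sin u ^ 2))
      (-(x * Real.sin u ^ 2) / Real.sqrt (1 - x^2 * Real.sin u ^ 2)) x := by
  have ht := aux_pos hx u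
  have h1 : HasDerivAt (fun y : ℝ => 1 - y^2 * Real.sin u ^ 2) (-(2 * x * Real.sin u ^ 2)) x := by
    simpa using ((hasDerivAt_pow 2 x).mul_const (Real.sin u ^ 2)).const_sub 1
  have h2 := (Real.hasDerivAt_sqrt ht.ne').comp x h1
  refine h2.congr_deriv (Eq.symm ?_)
  have hs : Real.sqrt (1 - x^2 * Real.sin u ^ 2) ≠ 0 := (Real.sqrt_pos.mpr ht).ne'
  field_simp

lemma hasDerivAt_invSqrtTerm {x : ℝ} (hx : |x| < 1) (u : ℝ) :
    HasDerivAt (fun y : ℝ => 1 / Real.sqrt (1 - y^2 * Real.sin u ^ 2))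
      (x * Real.sin u ^ 2 / (Real.sqrt (1 - x^2 * Real.sin u ^ 2))^3) x := by
  have ht := aux_pos hx u
  have hs : Real.sqrt (1 - x^2 * Real.sin u ^ 2) ≠ 0 := (Real.sqrt_pos.mpr ht).ne'
  have h2 := (hasDerivAt_sqrtTerm hx u).inv hs
  simp only [one_div]
  refine h2.congr_deriv (Eq.symm ?_)
  have h3 := Real.sq_sqrt ht.le
  field_simp

lemma hasDerivAt_ellE_int {k : ℝ} (hk : k ∈ Set.Ioo (0:ℝ) 1) :
    HasDerivAt ellE
      (∫ u in (0:ℝ)..(π/2), -(k * Real.sin u ^ 2) / Real.sqrt (1 - k^2 * Real.sin u ^ 2)) k := by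
  obtain ⟨hk0, hk1⟩ := hk
  set m : ℝ := (1 + k)/2 with hm
  have hm1 : m < 1 := by simp only [hm]; linarith
  have hm0 : 0 < m := by simp only [hm]; linarith
  have hε0 : (0:ℝ) < (1 - k)/2 := by linarith
  have hxm : ∀ x ∈ Metric.ball k ((1-k)/2), |x| < m := by
    intro x hx
    rw [Metric.mem_ball, Real.dist_eq, abs_lt] at hx
    rw [abs_lt]
    constructor <;> [simp only [hm]; simp only [hm]] <;> linarith [hx.1, hx.2]
  have hmm : (0:ℝ) < 1 - m^2 := by nlinarith
  have hkm : |k| < m := by rw [abs_of_pos hk0]; simp only [hm]; linarith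
  have key := intervalIntegral.hasDerivAt_integral_of_dominated_loc_of_deriv_le
    (F := fun x u => Real.sqrt (1 - x^2 * Real.sin u ^ 2))
    (F' := fun x u => -(x * Real.sin u ^ 2) / Real.sqrt (1 - x^2 * Real.sin u ^ 2))
    (x₀ := k) (a := (0:ℝ)) (b := π/2) (μ := MeasureTheory.volume)
    (bound := fun _ => 1 / Real.sqrt (1 - m^2)) (Metric.ball_mem_nhds k hε0)
    (Filter.Eventually.of_forall fun x => ((cont_sqrt x).aestronglyMeasurable))
    ((cont_sqrt k).intervalIntegrable _ _)
    ?_ ?_ ?_ ?_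
  · exact key.2
  · apply Continuous.aestronglyMeasurable
    apply Continuous.div (by fun_prop) (cont_sqrt k)
    exact fun u => (Real.sqrt_pos.mpr (aux_pos (hkm.trans hm1) u)).ne'
  · refine Filter.Eventually.of_forall fun u _ x hx => ?_
    have hxm' := hxm x hx
    have htx := aux_pos (hxm'.trans hm1) u
    have hbig : Real.sqrt (1 - m^2) ≤ Real.sqrt (1 - x^2 * Real.sin u ^ 2) := by
      apply Real.sqrt_le_sqrt
      have hs1 : Real.sin u ^ 2 ≤ 1 := Real.sin_sq_le_one u
      have : x^2 < m^2 := by nlinarith [abs_nonneg x, sq_abs x]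
      nlinarith [sq_nonneg x, sq_nonneg (Real.sin u)]
    rw [norm_div, Real.norm_eq_abs, Real.norm_eq_abs,
      abs_of_pos (Real.sqrt_pos.mpr htx)]
    apply div_le_div₀ (by positivity) _ (Real.sqrt_pos.mpr hmm) hbig
    have hs1 : Real.sin u ^ 2 ≤ 1 := Real.sin_sq_le_one u
    have : |(-(x * Real.sin u ^ 2))| = |x| * Real.sin u ^ 2 := by
      rw [abs_neg, abs_mul, abs_of_nonneg (sq_nonneg (Real.sin u))]
    rw [this]
    nlinarith [abs_nonneg x]
  · exact (continuous_const.intervalIntegrable _ _)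
  · exact Filter.Eventually.of_forall fun u _ x hx => hasDerivAt_sqrtTerm ((hxm x hx).trans hm1) u

lemma hasDerivAt_ellK_int {k : ℝ} (hk : k ∈ Set.Ioo (0:ℝ) 1) :
    HasDerivAt ellK
      (∫ u in (0:ℝ)..(π/2), k * Real.sin u ^ 2 / (Real.sqrt (1 - k^2 * Real.sin u ^ 2))^3) k := by
  obtain ⟨hk0, hk1⟩ := hk
  set m : ℝ := (1 + k)/2 with hm
  have hm1 : m < 1 := by simp only [hm]; linarith
  have hm0 : 0 < m := by simp only [hm]; linarith
  have hε0 : (0:ℝ) < (1 - k)/2 := by linarith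
  have hxm : ∀ x ∈ Metric.ball k ((1-k)/2), |x| < m := by
    intro x hx
    rw [Metric.mem_ball, Real.dist_eq, abs_lt] at hx
    rw [abs_lt]
    constructor <;> [simp only [hm]; simp only [hm]] <;> linarith [hx.1, hx.2]
  have hmm : (0:ℝ) < 1 - m^2 := by nlinarith
  have hkm : |k| < m := by rw [abs_of_pos hk0]; simp only [hm]; linarith
  have hcontK : ∀ x : ℝ, |x| < 1 →
      Continuous fun u : ℝ => 1 / Real.sqrt (1 - x^2 * Real.sin u ^ 2) := by
    intro x hx
    exact Continuous.div continuous_const (cont_sqrt x)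
      (fun u => (Real.sqrt_pos.mpr (aux_pos hx u)).ne')
  have key := intervalIntegral.hasDerivAt_integral_of_dominated_loc_of_deriv_le
    (F := fun x u => 1 / Real.sqrt (1 - x^2 * Real.sin u ^ 2))
    (F' := fun x u => x * Real.sin u ^ 2 / (Real.sqrt (1 - x^2 * Real.sin u ^ 2))^3)
    (x₀ := k) (a := (0:ℝ)) (b := π/2) (μ := MeasureTheory.volume)
    (bound := fun _ => 1 / (Real.sqrt (1 - m^2))^3) (Metric.ball_mem_nhds k hε0)
    ?_ ((hcontK k (hkm.trans hm1)).intervalIntegrable _ _)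
    ?_ ?_ ?_ ?_
  · exact key.2
  · filter_upwards [Metric.ball_mem_nhds k hε0] with x hx
    exact (hcontK x ((hxm x hx).trans hm1)).aestronglyMeasurable
  · apply Continuous.aestronglyMeasurable
    apply Continuous.div (by fun_prop) ((cont_sqrt k).pow 3)
    exact fun u => pow_ne_zero 3 (Real.sqrt_pos.mpr (aux_pos (hkm.trans hm1) u)).ne'
  · refine Filter.Eventually.of_forall fun u _ x hx => ?_
    have hxm' := hxm x hx
    have htx := aux_pos (hxm'.trans hm1) u
    have hbig : Real.sqrt (1 - m^2) ≤ Real.sqrt (1 - x^2 * Real.sin u ^ 2) := by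
      apply Real.sqrt_le_sqrt
      have hs1 : Real.sin u ^ 2 ≤ 1 := Real.sin_sq_le_one u
      have : x^2 < m^2 := by nlinarith [abs_nonneg x, sq_abs x]
      nlinarith [sq_nonneg x, sq_nonneg (Real.sin u)]
    rw [norm_div, Real.norm_eq_abs, Real.norm_eq_abs,
      abs_of_pos (pow_pos (Real.sqrt_pos.mpr htx) 3)]
    apply div_le_div₀ (by positivity) _ (pow_pos (Real.sqrt_pos.mpr hmm) 3)
      (pow_le_pow_left₀ (Real.sqrt_nonneg _) hbig 3)
    have hs1 : Real.sin u ^ 2 ≤ 1 := Real.sin_sq_le_one u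
    have : |x * Real.sin u ^ 2| = |x| * Real.sin u ^ 2 := by
      rw [abs_mul, abs_of_nonneg (sq_nonneg (Real.sin u))]
    rw [this]
    nlinarith [abs_nonneg x]
  · exact (continuous_const.intervalIntegrable _ _)
  · exact Filter.Eventually.of_forall fun u _ x hx => hasDerivAt_invSqrtTerm ((hxm x hx).trans hm1) u

lemma cont_invSqrt {k : ℝ} (hk : |k| < 1) :
    Continuous fun u : ℝ => 1 / Real.sqrt (1 - k^2 * Real.sin u ^ 2) :=
  Continuous.div continuous_const (cont_sqrt k)
    (fun u => (Real.sqrt_pos.mpr (aux_pos hk u)).ne')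

lemma cont_invSqrt3 {k : ℝ} (hk : |k| < 1) :
    Continuous fun u : ℝ => 1 / (Real.sqrt (1 - k^2 * Real.sin u ^ 2))^3 :=
  Continuous.div continuous_const ((cont_sqrt k).pow 3)
    (fun u => pow_ne_zero 3 (Real.sqrt_pos.mpr (aux_pos hk u)).ne')

lemma integral_inv_cube {k : ℝ} (hk : k ∈ Set.Ioo (0:ℝ) 1) :
    ∫ u in (0:ℝ)..(π/2), 1 / (Real.sqrt (1 - k^2 * Real.sin u ^ 2))^3
      = ellE k / (1 - k^2) := by
  obtain ⟨hk0, hk1⟩ := hk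
  have hkabs : |k| < 1 := by rw [abs_of_pos hk0]; exact hk1
  have hk2 : (0:ℝ) < 1 - k^2 := by nlinarith
  have hkne : k ≠ 0 := hk0.ne'
  -- derivative of g u = sin u * cos u / sqrt (1 - k^2 sin^2 u)
  have hg : ∀ u : ℝ, HasDerivAt (fun u => Real.sin u * Real.cos u / Real.sqrt (1 - k^2 * Real.sin u ^ 2))
      ((1/k^2) * Real.sqrt (1 - k^2 * Real.sin u ^ 2)
        + (1 - 1/k^2) * (1 / (Real.sqrt (1 - k^2 * Real.sin u ^ 2))^3)) u := by
    intro u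
    have ht := aux_pos hkabs u
    have hd0 : Real.sqrt (1 - k^2 * Real.sin u ^ 2) ≠ 0 := (Real.sqrt_pos.mpr ht).ne'
    have hd2 : Real.sqrt (1 - k^2 * Real.sin u ^ 2) ^ 2 = 1 - k^2 * Real.sin u ^ 2 :=
      Real.sq_sqrt ht.le
    have h1 : HasDerivAt (fun u => Real.sin u * Real.cos u)
        (Real.cos u ^ 2 - Real.sin u ^ 2) u := by
      have := (Real.hasDerivAt_sin u).mul (Real.hasDerivAt_cos u)
      refine this.congr_deriv (Eq.symm ?_); ring
    have hinner : HasDerivAt (fun u : ℝ => 1 - k^2 * Real.sin u ^ 2)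
        (-(k^2 * (2 * Real.sin u * Real.cos u))) u := by
      simpa [mul_comm, mul_assoc, mul_left_comm] using
        (((Real.hasDerivAt_sin u).pow 2).const_mul (k^2)).const_sub 1
    have h2 := (Real.hasDerivAt_sqrt ht.ne').comp u hinner
    have h3 := h1.div h2 hd0
    refine h3.congr_deriv (Eq.symm ?_)
    have hpyth : Real.sin u ^ 2 + Real.cos u ^ 2 = 1 := Real.sin_sq_add_cos_sq u
    simp only [Function.comp_apply]
    field_simp
    linear_combination (Real.sqrt (1 - k^2 * Real.sin u ^ 2) ^ 2 + 1 - k^2 * Real.sin u ^ 2 - k^2 * (1 - 2 * Real.sin u ^ 2)) * hd2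
      + (-k^2 * Real.sqrt (1 - k^2 * Real.sin u ^ 2) ^ 2 - k^4 * Real.sin u ^ 2) * hpyth
  have hcont : Continuous (fun u : ℝ => (1/k^2) * Real.sqrt (1 - k^2 * Real.sin u ^ 2)
      + (1 - 1/k^2) * (1 / (Real.sqrt (1 - k^2 * Real.sin u ^ 2))^3)) :=
    (continuous_const.mul (cont_sqrt k)).add (continuous_const.mul (cont_invSqrt3 hkabs))
  have hFTC := intervalIntegral.integral_eq_sub_of_hasDerivAt
    (fun u _ => hg u) (hcont.intervalIntegrable 0 (π/2))
  rw [Real.sin_pi_div_two, Real.cos_pi_div_two, Real.sin_zero] at hFTC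
  simp only [mul_zero, zero_mul, one_mul, zero_div, sub_zero] at hFTC
  have hsplit : ∫ u in (0:ℝ)..(π/2), ((1/k^2) * Real.sqrt (1 - k^2 * Real.sin u ^ 2)
      + (1 - 1/k^2) * (1 / (Real.sqrt (1 - k^2 * Real.sin u ^ 2))^3))
      = (1/k^2) * ellE k + (1 - 1/k^2) * ∫ u in (0:ℝ)..(π/2), 1 / (Real.sqrt (1 - k^2 * Real.sin u ^ 2))^3 := by
    rw [intervalIntegral.integral_add (f := fun u => (1/k^2) * Real.sqrt (1 - k^2 * Real.sin u ^ 2)) (g := fun u => (1 - 1/k^2) * (1 / (Real.sqrt (1 - k^2 * Real.sin u ^ 2))^3))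
        ((continuous_const.mul (cont_sqrt k)).intervalIntegrable _ _)
        ((continuous_const.mul (cont_invSqrt3 hkabs)).intervalIntegrable _ _),
      intervalIntegral.integral_const_mul, intervalIntegral.integral_const_mul]
    rfl
  rw [hsplit] at hFTC
  have h1k : 1 - 1/k^2 ≠ 0 := by
    have : k^2 < 1 := by nlinarith
    intro h
    have : 1/k^2 = 1 := by linarith
    rw [div_eq_one_iff_eq (by positivity)] at this
    nlinarith
  field_simp at hFTC ⊢
  nlinarith [hFTC]

lemma hasDerivAt_ellE' {k : ℝ} (hk : k ∈ Set.Ioo (0:ℝ) 1) :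
    HasDerivAt ellE ((ellE k - ellK k) / k) k := by
  obtain ⟨hk0, hk1⟩ := hk
  have hkabs : |k| < 1 := by rw [abs_of_pos hk0]; exact hk1
  have h := hasDerivAt_ellE_int ⟨hk0, hk1⟩
  have heq : ∀ u : ℝ, -(k * Real.sin u ^ 2) / Real.sqrt (1 - k^2 * Real.sin u ^ 2)
      = (1/k) * Real.sqrt (1 - k^2 * Real.sin u ^ 2)
        - (1/k) * (1 / Real.sqrt (1 - k^2 * Real.sin u ^ 2)) := by
    intro u
    have ht := aux_pos hkabs u
    have hd0 : Real.sqrt (1 - k^2 * Real.sin u ^ 2) ≠ 0 := (Real.sqrt_pos.mpr ht).ne'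
    have hd2 : Real.sqrt (1 - k^2 * Real.sin u ^ 2) ^ 2 = 1 - k^2 * Real.sin u ^ 2 :=
      Real.sq_sqrt ht.le
    field_simp
    linear_combination (-1 : ℝ) * hd2
  rw [intervalIntegral.integral_congr (g := fun u => (1/k) * Real.sqrt (1 - k^2 * Real.sin u ^ 2)
        - (1/k) * (1 / Real.sqrt (1 - k^2 * Real.sin u ^ 2))) (fun u _ => heq u)] at h
  rw [intervalIntegral.integral_sub (f := fun u => (1/k) * Real.sqrt (1 - k^2 * Real.sin u ^ 2)) (g := fun u => (1/k) * (1 / Real.sqrt (1 - k^2 * Real.sin u ^ 2)))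
      ((continuous_const.mul (cont_sqrt k)).intervalIntegrable _ _)
      ((continuous_const.mul (cont_invSqrt hkabs)).intervalIntegrable _ _),
    intervalIntegral.integral_const_mul, intervalIntegral.integral_const_mul] at h
  have : (1/k) * ellE k - (1/k) * ellK k = (ellE k - ellK k) / k := by ring
  rw [← this]
  exact h

lemma hasDerivAt_ellK' {k : ℝ} (hk : k ∈ Set.Ioo (0:ℝ) 1) :
    HasDerivAt ellK ((ellE k / (1 - k^2) - ellK k) / k) k := by
  obtain ⟨hk0, hk1⟩ := hk
  have hkabs : |k| < 1 := by rw [abs_of_pos hk0]; exact hk1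
  have h := hasDerivAt_ellK_int ⟨hk0, hk1⟩
  have heq : ∀ u : ℝ, k * Real.sin u ^ 2 / (Real.sqrt (1 - k^2 * Real.sin u ^ 2))^3
      = (1/k) * (1 / (Real.sqrt (1 - k^2 * Real.sin u ^ 2))^3)
        - (1/k) * (1 / Real.sqrt (1 - k^2 * Real.sin u ^ 2)) := by
    intro u
    have ht := aux_pos hkabs u
    have hd0 : Real.sqrt (1 - k^2 * Real.sin u ^ 2) ≠ 0 := (Real.sqrt_pos.mpr ht).ne'
    have hd2 : Real.sqrt (1 - k^2 * Real.sin u ^ 2) ^ 2 = 1 - k^2 * Real.sin u ^ 2 :=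
      Real.sq_sqrt ht.le
    field_simp
    linear_combination (1 : ℝ) * hd2
  rw [intervalIntegral.integral_congr
      (g := fun u => (1/k) * (1 / (Real.sqrt (1 - k^2 * Real.sin u ^ 2))^3)
        - (1/k) * (1 / Real.sqrt (1 - k^2 * Real.sin u ^ 2))) (fun u _ => heq u)] at h
  rw [intervalIntegral.integral_sub (f := fun u => (1/k) * (1 / (Real.sqrt (1 - k^2 * Real.sin u ^ 2))^3)) (g := fun u => (1/k) * (1 / Real.sqrt (1 - k^2 * Real.sin u ^ 2)))
      ((continuous_const.mul (cont_invSqrt3 hkabs)).intervalIntegrable _ _)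
      ((continuous_const.mul (cont_invSqrt hkabs)).intervalIntegrable _ _),
    intervalIntegral.integral_const_mul, intervalIntegral.integral_const_mul,
    integral_inv_cube ⟨hk0, hk1⟩] at h
  have : (1/k) * (ellE k / (1 - k^2)) - (1/k) * ellK k = (ellE k / (1 - k^2) - ellK k) / k := by
    ring
  rw [← this]
  exact h

theorem stmt_1 (b k : ℝ) (hb : 0 < b) (hk : k ∈ Set.Ioo (0:ℝ) 1) :
    HasDerivAt (fun k => kappa b k)
      (-2 * (2 * (ellE k - ellK k) + k^2 * ellK k) /
        (π * b * k * Real.sqrt (1 - k^2) * (1 + Real.sqrt (1 - k^2)))) k := by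
  obtain ⟨hk0, hk1⟩ := hk
  have hk2 : (0:ℝ) < 1 - k^2 := by nlinarith
  have hs0 : 0 < Real.sqrt (1 - k^2) := Real.sqrt_pos.mpr hk2
  have hs2 : Real.sqrt (1 - k^2) ^ 2 = 1 - k^2 := Real.sq_sqrt hk2.le
  have hπ : (0:ℝ) < π := Real.pi_pos
  have hsder : HasDerivAt (fun k : ℝ => Real.sqrt (1 - k^2)) (-k / Real.sqrt (1 - k^2)) k := by
    have hinner : HasDerivAt (fun y : ℝ => 1 - y^2) (-(2*k)) k := by
      simpa using (hasDerivAt_pow 2 k).const_sub 1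
    have := (Real.hasDerivAt_sqrt hk2.ne').comp k hinner
    refine this.congr_deriv (Eq.symm ?_)
    field_simp
  have hE := hasDerivAt_ellE' ⟨hk0, hk1⟩
  have hK := hasDerivAt_ellK' ⟨hk0, hk1⟩
  have hnum : HasDerivAt (fun k => -2 * (ellE k + Real.sqrt (1 - k^2) * ellK k))
      (-2 * ((ellE k - ellK k)/k + ((-k / Real.sqrt (1 - k^2)) * ellK k
        + Real.sqrt (1 - k^2) * ((ellE k / (1 - k^2) - ellK k)/k)))) k :=
    (hE.add (hsder.mul hK)).const_mul (-2)
  have hden : HasDerivAt (fun k : ℝ => π * b * (1 + Real.sqrt (1 - k^2)))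
      (π * b * (-k / Real.sqrt (1 - k^2))) k :=
    (hsder.const_add 1).const_mul (π * b)
  have hden_ne : π * b * (1 + Real.sqrt (1 - k^2)) ≠ 0 := by positivity
  have h := hnum.div hden hden_ne
  simp only [kappa]
  refine h.congr_deriv (Eq.symm ?_)
  field_simp
  linear_combination ((1 + Real.sqrt (1 - k^2)) * (ellE k - ellK k * (1 - k^2)) + (1 - k^2) * (ellE k - ellK k)) * hs2
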